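/- Let X, Y be real random variables on a probability space (Ω, ℱ, P) with E[|Y|] < ∞, and let α ∈ (0,1). Let g : ℝ → ℝ be any Borel measurable function such that g∘X is a version of the conditional expectation of Y given the σ-algebra generated by X. Then ∫_α^1 g(−VaR_u(X)) du = E[Y·1{−X ≥ q_α(−X)}] + g(−q_α(−X))·(P[−X < q_α(−X)] − α), where the left-hand side is the Lebesgue integral over u ∈ (α,1). In particular, the value of ∫_α^1 g(−VaR_u(X)) du is the same for every such version g. -/

import Mathlib

open MeasureTheory Set Filter
open scoped ENNReal Topology

section InvCDF

noncomputable def invCDF (ν : Measure ℝ) (u : ℝ) : ℝ :=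
  sInf {x : ℝ | ENNReal.ofReal u ≤ ν (Iic x)}

variable (ν : Measure ℝ) [IsProbabilityMeasure ν]

lemma invCDF_set_nonempty {u : ℝ} (hu : u < 1) :
    {x : ℝ | ENNReal.ofReal u ≤ ν (Iic x)}.Nonempty := by
  have h1 : ENNReal.ofReal u < 1 := by
    calc ENNReal.ofReal u < ENNReal.ofReal 1 := by
          exact ENNReal.ofReal_lt_ofReal_iff one_pos |>.2 hu
      _ = 1 := ENNReal.ofReal_one
  have ht := tendsto_measure_Iic_atTop (α := ℝ) ν
  rw [measure_univ] at ht
  obtain ⟨x, hx⟩ := (ht.eventually_const_lt h1).exists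
  exact ⟨x, hx.le⟩

lemma invCDF_set_bddBelow {u : ℝ} (hu : 0 < u) :
    BddBelow {x : ℝ | ENNReal.ofReal u ≤ ν (Iic x)} := by
  have h0 : Tendsto (fun n : ℕ => ν (Iic (-(n:ℝ)))) atTop (𝓝 0) := by
    have h := tendsto_measure_iInter_atTop (μ := ν) (s := fun n : ℕ => Iic (-(n:ℝ)))
      (fun n => measurableSet_Iic.nullMeasurableSet)
      (fun n m hnm => Iic_subset_Iic.2 (by exact_mod_cast neg_le_neg (Nat.cast_le.2 hnm : (n:ℝ) ≤ m)))
      ⟨0, measure_ne_top _ _⟩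
    have hempty : (⋂ n : ℕ, Iic (-(n:ℝ))) = ∅ := by
      ext x
      simp only [mem_iInter, mem_Iic, mem_empty_iff_false, iff_false, not_forall, not_le]
      obtain ⟨n, hn⟩ := exists_nat_gt (-x)
      exact ⟨n, by linarith⟩
    rw [hempty, measure_empty] at h
    exact h
  have hu' : (0:ℝ≥0∞) < ENNReal.ofReal u := ENNReal.ofReal_pos.2 hu
  obtain ⟨n, hn⟩ := (h0.eventually_lt_const hu').exists
  refine ⟨-(n:ℝ), fun x hx => ?_⟩
  by_contra hlt
  push_neg at hlt
  exact absurd (le_trans hx (measure_mono (Iic_subset_Iic.2 hlt.le))) (not_le.2 hn)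
lemma le_measure_Iic_invCDF {u : ℝ} (hu0 : 0 < u) (hu1 : u < 1) :
    ENNReal.ofReal u ≤ ν (Iic (invCDF ν u)) := by
  set q := invCDF ν u with hq
  have key : ∀ ε : ℝ, 0 < ε → ENNReal.ofReal u ≤ ν (Iic (q + ε)) := by
    intro ε hε
    have : sInf {x : ℝ | ENNReal.ofReal u ≤ ν (Iic x)} < q + ε := by
      have : invCDF ν u < q + ε := by linarith
      exact this
    obtain ⟨y, hy, hyq⟩ := (csInf_lt_iff (invCDF_set_bddBelow ν hu0)
      (invCDF_set_nonempty ν hu1)).1 this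
    exact le_trans hy (measure_mono (Iic_subset_Iic.2 hyq.le))
  have hiinter : (⋂ n : ℕ, Iic (q + 1 / (n + 1))) = Iic q := by
    ext x
    simp only [mem_iInter, mem_Iic]
    constructor
    · intro h
      by_contra hx
      push_neg at hx
      obtain ⟨n, hn⟩ := exists_nat_one_div_lt (show (0:ℝ) < x - q by linarith)
      have := h n
      push_cast at this hn
      linarith
    · intro h n
      have : (0:ℝ) < 1 / (n + 1) := by positivity
      linarith
  have htend := tendsto_measure_iInter_atTop (μ := ν) (s := fun n : ℕ => Iic (q + 1 / (n + 1)))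
    (fun _ => measurableSet_Iic.nullMeasurableSet)
    (fun n m hnm => Iic_subset_Iic.2 (by
      have h1 : (1:ℝ) / (m + 1) ≤ 1 / (n + 1) := by
        apply div_le_div_of_nonneg_left one_pos.le (by positivity)
        exact_mod_cast Nat.succ_le_succ hnm
      linarith))
    ⟨0, measure_ne_top _ _⟩
  rw [hiinter] at htend
  exact ge_of_tendsto' htend fun n => key _ (by positivity)

lemma invCDF_le_iff {u x : ℝ} (hu0 : 0 < u) (hu1 : u < 1) :
    invCDF ν u ≤ x ↔ ENNReal.ofReal u ≤ ν (Iic x) := by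
  constructor
  · intro h
    exact le_trans (le_measure_Iic_invCDF ν hu0 hu1) (measure_mono (Iic_subset_Iic.2 h))
  · intro h
    exact csInf_le (invCDF_set_bddBelow ν hu0) h

lemma invCDF_mono {u v : ℝ} (hu0 : 0 < u) (hv1 : v < 1) (h : u ≤ v) :
    invCDF ν u ≤ invCDF ν v := by
  apply csInf_le_csInf (invCDF_set_bddBelow ν hu0) (invCDF_set_nonempty ν hv1)
  intro x hx
  exact le_trans (ENNReal.ofReal_le_ofReal h) hx

lemma monotoneOn_invCDF : MonotoneOn (invCDF ν) (Ioo (0:ℝ) 1) :=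
  fun _ hu _ hv huv => invCDF_mono ν hu.1 hv.2 huv

lemma aemeasurable_invCDF : AEMeasurable (invCDF ν) (volume.restrict (Ioo (0:ℝ) 1)) :=
  aemeasurable_restrict_of_monotoneOn measurableSet_Ioo (monotoneOn_invCDF ν)

lemma map_invCDF : (volume.restrict (Ioo (0:ℝ) 1)).map (invCDF ν) = ν := by
  have hQae := aemeasurable_invCDF ν
  have hmass : ((volume.restrict (Ioo (0:ℝ) 1)).map (invCDF ν)) univ = 1 := by
    rw [Measure.map_apply_of_aemeasurable hQae MeasurableSet.univ]
    simp [Real.volume_Ioo]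
  haveI : IsProbabilityMeasure ((volume.restrict (Ioo (0:ℝ) 1)).map (invCDF ν)) := ⟨hmass⟩
  refine MeasureTheory.Measure.ext_of_Iic _ _ (fun x => ?_)
  rw [Measure.map_apply_of_aemeasurable hQae measurableSet_Iic,
    Measure.restrict_apply' measurableSet_Ioo]
  have ht0 : (0:ℝ) ≤ (ν (Iic x)).toReal := ENNReal.toReal_nonneg
  have ht1 : (ν (Iic x)).toReal ≤ 1 := by
    rw [show (1:ℝ) = (ν univ).toReal by simp]
    exact ENNReal.toReal_mono (measure_ne_top _ _) (measure_mono (subset_univ _))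
  have hset : invCDF ν ⁻¹' Iic x ∩ Ioo 0 1 = Ioc 0 ((ν (Iic x)).toReal) \ {1} := by
    ext u
    simp only [mem_inter_iff, mem_preimage, mem_Iic, mem_Ioo, mem_diff, mem_Ioc,
      mem_singleton_iff]
    constructor
    · rintro ⟨hle, hu0, hu1⟩
      have := (invCDF_le_iff ν hu0 hu1).1 hle
      exact ⟨⟨hu0, (ENNReal.ofReal_le_iff_le_toReal (measure_ne_top _ _)).1 this⟩, ne_of_lt hu1⟩
    · rintro ⟨⟨hu0, hut⟩, hne⟩
      have hu1 : u < 1 := lt_of_le_of_ne (le_trans hut ht1) hne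
      refine ⟨(invCDF_le_iff ν hu0 hu1).2 ?_, hu0, hu1⟩
      exact (ENNReal.ofReal_le_iff_le_toReal (measure_ne_top _ _)).2 hut
  rw [hset, measure_diff_null (Real.volume_singleton), Real.volume_Ioc,
    sub_zero, ENNReal.ofReal_toReal (measure_ne_top _ _)]

lemma integral_invCDF (f : ℝ → ℝ) (hf : Measurable f) (hfi : Integrable f ν)
    {α : ℝ} (hα0 : 0 < α) (hα1 : α < 1) :
    ∫ u in Ioo α 1, f (invCDF ν u)
      = (∫ x in Ioi (invCDF ν α), f x ∂ν)
        + f (invCDF ν α) * ((ν (Iic (invCDF ν α))).toReal - α) := by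
  set q := invCDF ν α with hqdef
  set β := (ν (Iic q)).toReal with hβdef
  have hβne : ν (Iic q) ≠ ⊤ := measure_ne_top _ _
  have hαβ : α ≤ β := by
    have h := le_measure_Iic_invCDF ν hα0 hα1
    have := ENNReal.toReal_mono hβne h
    rwa [ENNReal.toReal_ofReal hα0.le] at this
  have hβ1 : β ≤ 1 := by
    rw [hβdef, show (1:ℝ) = (ν univ).toReal by simp]
    exact ENNReal.toReal_mono (measure_ne_top _ _) (measure_mono (subset_univ _))
  have hQae := aemeasurable_invCDF ν
  -- integrability of f ∘ invCDF on (0,1)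
  have hfQ : Integrable (fun u => f (invCDF ν u)) (volume.restrict (Ioo (0:ℝ) 1)) := by
    have := (integrable_map_measure hf.aestronglyMeasurable hQae).1
    rw [map_invCDF ν] at this
    exact this hfi
  set T1 : Set ℝ := Ioo α 1 ∩ Iic β with hT1def
  set T2 : Set ℝ := Ioo α 1 ∩ Ioi β with hT2def
  have hsplit : Ioo α 1 = T1 ∪ T2 := by
    rw [hT1def, hT2def, ← inter_union_distrib_left, Iic_union_Ioi, inter_univ]
  have hd : Disjoint T1 T2 :=
    (Iic_disjoint_Ioi le_rfl).mono inter_subset_right inter_subset_right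
  have hsub : Ioo α 1 ⊆ Ioo 0 1 := Ioo_subset_Ioo hα0.le le_rfl
  have hi : ∀ s : Set ℝ, s ⊆ Ioo 0 1 → IntegrableOn (fun u => f (invCDF ν u)) s volume :=
    fun s hs => hfQ.mono_measure (Measure.restrict_mono hs le_rfl)
  have hi1 : IntegrableOn (fun u => f (invCDF ν u)) T1 volume :=
    hi _ ((inter_subset_left).trans hsub)
  have hi2 : IntegrableOn (fun u => f (invCDF ν u)) T2 volume :=
    hi _ ((inter_subset_left).trans hsub)
  have hT1val : ∀ u ∈ T1, f (invCDF ν u) = f q := by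
    rintro u ⟨⟨hu0, hu1⟩, huβ⟩
    have hu0' : (0:ℝ) < u := lt_trans hα0 hu0
    have h1 : invCDF ν u ≤ q := by
      rw [invCDF_le_iff ν hu0' hu1]
      exact (ENNReal.ofReal_le_iff_le_toReal hβne).2 huβ
    have h2 : q ≤ invCDF ν u := invCDF_mono ν hα0 hu1 hu0.le
    rw [le_antisymm h1 h2]
  have hT2eq : T2 = Ioo β 1 := by
    ext u
    simp only [hT2def, mem_inter_iff, mem_Ioo, mem_Ioi]
    constructor
    · rintro ⟨⟨_, h2⟩, h3⟩; exact ⟨h3, h2⟩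
    · rintro ⟨h1, h2⟩; exact ⟨⟨lt_of_le_of_lt hαβ h1, h2⟩, h1⟩
  have hT1vol : volume T1 = ENNReal.ofReal (β - α) := by
    have : T1 = Ioc α β \ {1} := by
      ext u
      simp only [hT1def, mem_inter_iff, mem_Ioo, mem_Iic, mem_diff, mem_Ioc, mem_singleton_iff]
      constructor
      · rintro ⟨⟨h1, h2⟩, h3⟩; exact ⟨⟨h1, h3⟩, ne_of_lt h2⟩
      · rintro ⟨⟨h1, h3⟩, hne⟩
        exact ⟨⟨h1, lt_of_le_of_ne (h3.trans hβ1) hne⟩, h3⟩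
    rw [this, measure_diff_null Real.volume_singleton, Real.volume_Ioc]
  -- the T2 integral equals ∫ over Ioi q
  have hT2int : ∫ u in T2, f (invCDF ν u) = ∫ x in Ioi q, f x ∂ν := by
    rw [hT2eq]
    have hrr : volume.restrict (Ioo β 1) =
        (volume.restrict (Ioo (0:ℝ) 1)).restrict (Ioo β 1) := by
      rw [Measure.restrict_restrict measurableSet_Ioo, inter_eq_left.2
        (Ioo_subset_Ioo (le_trans hα0.le hαβ) le_rfl)]
    have hind : ∫ u in Ioo β 1, f (invCDF ν u)
        = ∫ u in Ioo (0:ℝ) 1, (Ioo β 1).indicator (fun u => f (invCDF ν u)) u := by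
      rw [integral_indicator measurableSet_Ioo, ← hrr]
    rw [hind]
    have hcong : ∀ u ∈ Ioo (0:ℝ) 1,
        (Ioo β 1).indicator (fun u => f (invCDF ν u)) u
          = (Ioi q).indicator f (invCDF ν u) := by
      rintro u ⟨hu0, hu1⟩
      by_cases hβu : β < u
      · have hmem : u ∈ Ioo β 1 := ⟨hβu, hu1⟩
        have hq : invCDF ν u ∈ Ioi q := by
          simp only [mem_Ioi]
          by_contra hle
          push_neg at hle
          have := (invCDF_le_iff ν hu0 hu1).1 hle
          have := (ENNReal.ofReal_le_iff_le_toReal hβne).1 this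
          linarith
        rw [indicator_of_mem hmem, indicator_of_mem hq]
      · push_neg at hβu
        have h1 : invCDF ν u ≤ q := by
          rw [invCDF_le_iff ν hu0 hu1]
          exact (ENNReal.ofReal_le_iff_le_toReal hβne).2 hβu
        rw [indicator_of_notMem (fun h => absurd h.1 (not_lt.2 hβu)),
          indicator_of_notMem (fun h => absurd (mem_Ioi.1 h) (not_lt.2 h1))]
    rw [setIntegral_congr_fun measurableSet_Ioo hcong]
    have := integral_map (μ := volume.restrict (Ioo (0:ℝ) 1)) hQae
      (f := (Ioi q).indicator f)
      (by rw [map_invCDF ν]; exact (hf.indicator measurableSet_Ioi).aestronglyMeasurable)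
    rw [map_invCDF ν] at this
    rw [← this, integral_indicator measurableSet_Ioi]
  calc ∫ u in Ioo α 1, f (invCDF ν u)
      = (∫ u in T1, f (invCDF ν u)) + ∫ u in T2, f (invCDF ν u) := by
        rw [hsplit]
        exact setIntegral_union hd (measurableSet_Ioo.inter measurableSet_Ioi) hi1 hi2
    _ = (β - α) * f q + ∫ x in Ioi q, f x ∂ν := by
        rw [hT2int, setIntegral_congr_fun (measurableSet_Ioo.inter measurableSet_Iic) hT1val,
          setIntegral_const, measureReal_def, hT1vol, ENNReal.toReal_ofReal (by linarith), smul_eq_mul]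
    _ = _ := by ring

end InvCDF

/-- The `α`-quantile of a real random variable `X`:
`q_α(X) = inf {x ∈ ℝ : P[X ≤ x] ≥ α}`. -/
noncomputable def quantile {Ω : Type*} [MeasurableSpace Ω] (μ : Measure Ω)
    (X : Ω → ℝ) (α : ℝ) : ℝ :=
  sInf {x : ℝ | ENNReal.ofReal α ≤ μ {ω | X ω ≤ x}}

/-- Value-at-risk at level `α`: `VaR_α(X) = q_α(-X)`. -/
noncomputable def VaR {Ω : Type*} [MeasurableSpace Ω] (μ : Measure Ω)
    (X : Ω → ℝ) (α : ℝ) : ℝ :=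
  quantile μ (fun ω => - X ω) α

/-- For integrable `Y` and `g` with `g ∘ X` a version of `E[Y | σ(X)]`:
`∫_α^1 E[Y | X = -VaR_u(X)] du
  = E[Y·1{-X ≥ q_α(-X)}] + E[Y | -X = q_α(-X)]·(P[-X < q_α(-X)] - α)`,
and the left-hand side does not depend on the chosen version. -/
theorem integral_condexp_along_var {Ω : Type*} [MeasurableSpace Ω]
    (μ : Measure Ω) [IsProbabilityMeasure μ]
    (X Y : Ω → ℝ) (hX : Measurable X) (hY : Measurable Y) (hYint : Integrable Y μ)
    (α : ℝ) (hα : α ∈ Set.Ioo (0 : ℝ) 1)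
    (g : ℝ → ℝ) (hg : Measurable g)
    (hver : (fun ω => g (X ω)) =ᵐ[μ] μ[Y | MeasurableSpace.comap X Real.measurableSpace]) :
    (∫ u in Set.Ioo α 1, g (- VaR μ X u))
        = (∫ ω in {ω | quantile μ (fun ω' => - X ω') α ≤ - X ω}, Y ω ∂μ)
          + g (- quantile μ (fun ω' => - X ω') α)
            * ((μ {ω | - X ω < quantile μ (fun ω' => - X ω') α}).toReal - α) ∧
      ∀ g₂ : ℝ → ℝ, Measurable g₂ →
        (fun ω => g₂ (X ω)) =ᵐ[μ] μ[Y | MeasurableSpace.comap X Real.measurableSpace] →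
        (∫ u in Set.Ioo α 1, g (- VaR μ X u)) = ∫ u in Set.Ioo α 1, g₂ (- VaR μ X u) := by

  obtain ⟨hα0, hα1⟩ := hα
  have hZ : Measurable (fun ω => - X ω) := hX.neg
  set ν : Measure ℝ := μ.map (fun ω => - X ω) with hνdef
  haveI : IsProbabilityMeasure ν := Measure.isProbabilityMeasure_map hZ.aemeasurable
  -- quantile = invCDF of the law of -X
  have hquant : ∀ p : ℝ, quantile μ (fun ω' => - X ω') p = invCDF ν p := by
    intro p
    unfold quantile invCDF
    congr 1
    ext x
    simp only [mem_setOf_eq, hνdef, Measure.map_apply hZ measurableSet_Iic]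
    rfl
  set q : ℝ := invCDF ν α with hqdef
  -- the conditional-expectation σ-algebra
  have hm : MeasurableSpace.comap X Real.measurableSpace ≤ _ := hX.comap_le
  -- f = g ∘ neg
  set f : ℝ → ℝ := fun x => g (-x) with hfdef
  have hf : Measurable f := hg.comp measurable_neg
  have hfZ : (fun ω => f (- X ω)) = fun ω => g (X ω) := by
    funext ω; simp [hfdef]
  have hgint : Integrable (fun ω => g (X ω)) μ := integrable_condExp.congr hver.symm
  have hfν : Integrable f ν := by
    refine (integrable_map_measure hf.aestronglyMeasurable hZ.aemeasurable).2 ?_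
    have : (f ∘ fun ω => - X ω) = fun ω => g (X ω) := by
      funext ω; simp [hfdef]
    rw [this]; exact hgint
  -- LHS integrand rewriting
  have hVaR : ∀ u : ℝ, VaR μ X u = invCDF ν u := fun u => hquant u
  have hlhs : ∀ g' : ℝ → ℝ, (fun u => g' (- VaR μ X u))
      = fun u => (fun x => g' (-x)) (invCDF ν u) := by
    intro g'; funext u
    rw [hVaR]
  -- the conditional expectation set-integral identity
  have hsetY : ∀ s : Set ℝ, MeasurableSet s →
      ∫ ω in (fun ω => - X ω) ⁻¹' s, Y ω ∂μ = ∫ x in s, f x ∂ν := by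
    intro s hs
    have hsmX : MeasurableSet[MeasurableSpace.comap X Real.measurableSpace] ((fun ω => - X ω) ⁻¹' s) := by
      refine ⟨Neg.neg ⁻¹' s, measurable_neg hs, rfl⟩
    rw [← setIntegral_condExp hm hYint hsmX]
    have h1 : ∫ ω in (fun ω => - X ω) ⁻¹' s, (μ[Y|MeasurableSpace.comap X Real.measurableSpace]) ω ∂μ
        = ∫ ω in (fun ω => - X ω) ⁻¹' s, g (X ω) ∂μ := by
      refine setIntegral_congr_ae (hm _ hsmX) ?_
      filter_upwards [hver] with ω hω _
      rw [hω]
    rw [h1, hνdef, setIntegral_map hs hf.aestronglyMeasurable hZ.aemeasurable]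
    simp only [hfdef, neg_neg]
  constructor
  · -- main formula
    rw [hlhs g]
    rw [integral_invCDF ν f hf hfν hα0 hα1]
    have hset1 : {ω | quantile μ (fun ω' => - X ω') α ≤ - X ω}
        = (fun ω => - X ω) ⁻¹' Ici q := by
      ext ω; simp [hquant, hqdef]
    have hset2 : μ {ω | - X ω < quantile μ (fun ω' => - X ω') α} = ν (Iio q) := by
      rw [hνdef, Measure.map_apply hZ measurableSet_Iio]
      simp only [hquant]
      rfl
    rw [hset1, hset2, hsetY _ measurableSet_Ici]
    -- split Ici q = {q} ∪ Ioi q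
    have hIci : Ici q = {q} ∪ Ioi q := by
      rw [union_comm, Ioi_union_left]
    have hsing : ∫ x in ({q} : Set ℝ), f x ∂ν = (ν {q}).toReal * f q := by
      rw [Measure.restrict_singleton, integral_smul_measure, integral_dirac, smul_eq_mul]
    have hsplit : ∫ x in Ici q, f x ∂ν
        = (ν {q}).toReal * f q + ∫ x in Ioi q, f x ∂ν := by
      rw [hIci, setIntegral_union (by simp) measurableSet_Ioi
        (hfν.integrableOn) (hfν.integrableOn), hsing]
    have hmeas_add : (ν (Iic q)).toReal = (ν (Iio q)).toReal + (ν {q}).toReal := by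
      rw [← ENNReal.toReal_add (measure_ne_top _ _) (measure_ne_top _ _)]
      congr 1
      rw [← measure_union (by simp) (measurableSet_singleton q), Iio_union_right]
    have hgq : g (- quantile μ (fun ω' => - X ω') α) = f q := by
      rw [hquant]
    rw [hsplit, hgq, hmeas_add]
    ring
  · -- independence of the version
    intro g₂ hg₂ hver₂
    set f₂ : ℝ → ℝ := fun x => g₂ (-x) with hf₂def
    have hf₂ : Measurable f₂ := hg₂.comp measurable_neg
    have haeμ : (fun ω => f (- X ω)) =ᵐ[μ] (fun ω => f₂ (- X ω)) := by
      have h2 : (fun ω => f₂ (- X ω)) = fun ω => g₂ (X ω) := by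
        funext ω; simp [hf₂def]
      rw [hfZ, h2]
      exact hver.trans hver₂.symm
    have hN : MeasurableSet {x : ℝ | f x ≠ f₂ x} :=
      (measurableSet_eq_fun hf hf₂).compl
    have hνN : ν {x : ℝ | f x ≠ f₂ x} = 0 := by
      rw [hνdef, Measure.map_apply hZ hN]
      have : (fun ω => - X ω) ⁻¹' {x : ℝ | f x ≠ f₂ x}
          = {ω | f (- X ω) ≠ f₂ (- X ω)} := rfl
      rw [this]
      exact haeμ
    have haeQ : (fun u => f (invCDF ν u)) =ᵐ[volume.restrict (Ioo (0:ℝ) 1)]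
        (fun u => f₂ (invCDF ν u)) := by
      have hmap0 : (volume.restrict (Ioo (0:ℝ) 1)) (invCDF ν ⁻¹' {x : ℝ | f x ≠ f₂ x}) = 0 := by
        rw [← Measure.map_apply_of_aemeasurable (aemeasurable_invCDF ν) hN, map_invCDF ν, hνN]
      apply ae_iff.mpr
      exact measure_mono_null (fun u hu => hu) hmap0
    have haeQ' : (fun u => f (invCDF ν u)) =ᵐ[volume.restrict (Ioo α 1)]
        (fun u => f₂ (invCDF ν u)) :=
      ae_mono (Measure.restrict_mono (Ioo_subset_Ioo hα0.le le_rfl) le_rfl) haeQ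
    rw [hlhs g, hlhs g₂]
    exact integral_congr_ae haeQ'
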